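/- For every 0 < δ < 1 there exists a constant c = c(δ) > 0 such that the following holds. Let M > 0 and let (a₁,…,a_m) be a finite sequence of real numbers with 1 ≤ a_j ≤ (1−δ)^j·M for each j ∈ {1,…,m}, and set s = a₁ + ⋯ + a_m. Then s·log s ≤ Σ_{j=1}^m a_j·log a_j + c·M. -/

import Mathlib

open Finset

lemma log_le_two_sqrt (x : ℝ) (hx : 0 ≤ x) : Real.log x ≤ 2 * Real.sqrt x := by
  rcases eq_or_lt_of_le hx with h | h
  · simp [← h]
  · have hs : 0 < Real.sqrt x := Real.sqrt_pos.mpr h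
    have h1 : Real.log (Real.sqrt x) ≤ Real.sqrt x - 1 :=
      Real.log_le_sub_one_of_pos hs
    have h2 : Real.log x = 2 * Real.log (Real.sqrt x) := by
      rw [Real.log_sqrt hx]; ring
    linarith

lemma sqrt_pow_eq (x : ℝ) (hx : 0 ≤ x) (n : ℕ) :
    Real.sqrt (x ^ n) = Real.sqrt x ^ n := by
  induction n with
  | zero => simp
  | succ n ih => rw [pow_succ, pow_succ, Real.sqrt_mul (pow_nonneg hx n), ih]

lemma geom_sum_le_inv (x : ℝ) (hx0 : 0 ≤ x) (hx1 : x < 1) (n : ℕ) :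
    ∑ i ∈ Finset.range n, x ^ i ≤ 1 / (1 - x) := by
  have hd : 0 < 1 - x := by linarith
  rw [geom_sum_eq (ne_of_lt hx1) n]
  have hxn : 0 ≤ x ^ n := pow_nonneg hx0 n
  have he : (x ^ n - 1) / (x - 1) = (1 - x ^ n) / (1 - x) := by
    rw [← neg_div_neg_eq]; ring_nf
  rw [he]
  gcongr
  linarith

/-- The technical `s log s` lemma: if `1 ≤ a_j ≤ (1-δ)^j M` for `1 ≤ j ≤ m` and
`s = a₁ + ⋯ + a_m`, then `s log s ≤ Σ_j a_j log a_j + c·M`, where `c` depends only on `δ`. -/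
theorem statement16 (δ : ℝ) (hδ0 : 0 < δ) (hδ1 : δ < 1) :
    ∃ c : ℝ, 0 < c ∧ ∀ (M : ℝ), 0 < M → ∀ (m : ℕ) (a : ℕ → ℝ),
      (∀ j : ℕ, 1 ≤ j → j ≤ m → 1 ≤ a j ∧ a j ≤ (1 - δ) ^ j * M) →
      (∑ j ∈ Finset.Icc 1 m, a j) * Real.log (∑ j ∈ Finset.Icc 1 m, a j) ≤
        (∑ j ∈ Finset.Icc 1 m, a j * Real.log (a j)) + c * M := by
  set r := Real.sqrt (1 - δ) with hr_def
  have h1δ : (0:ℝ) ≤ 1 - δ := by linarith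
  have hr0 : 0 ≤ r := Real.sqrt_nonneg _
  have hr1 : r < 1 := by
    have := Real.sqrt_lt_sqrt h1δ (show (1:ℝ) - δ < 1 by linarith)
    simpa using this
  have hsδ : 0 < Real.sqrt δ := Real.sqrt_pos.mpr hδ0
  have hrd : 0 < 1 - r := by linarith
  refine ⟨2 / (Real.sqrt δ * (1 - r)), by positivity, ?_⟩
  intro M hM m a h
  rcases Nat.eq_zero_or_pos m with hm | hm
  · subst hm
    rw [Finset.Icc_eq_empty (by omega)]
    simp only [Finset.sum_empty, Real.log_zero, zero_mul, zero_add]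
    positivity
  · set s := ∑ j ∈ Finset.Icc 1 m, a j with hs_def
    have hmem1 : 1 ∈ Finset.Icc 1 m := by rw [Finset.mem_Icc]; omega
    have hpos : ∀ j ∈ Finset.Icc 1 m, 1 ≤ a j := by
      intro j hj
      rw [Finset.mem_Icc] at hj
      exact (h j hj.1 hj.2).1
    have hs1 : 1 ≤ s :=
      le_trans (hpos 1 hmem1)
        (Finset.single_le_sum (fun i hi => by linarith [hpos i hi]) hmem1)
    have hs0 : 0 < s := by linarith
    have hsum_geom : ∀ (x : ℝ), 0 ≤ x → x < 1 →
        ∑ j ∈ Finset.Icc 1 m, x ^ j ≤ 1 / (1 - x) := by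
      intro x hx0 hx1
      calc ∑ j ∈ Finset.Icc 1 m, x ^ j
          ≤ ∑ j ∈ Finset.range (m + 1), x ^ j := by
            apply Finset.sum_le_sum_of_subset_of_nonneg
            · intro j hj
              rw [Finset.mem_Icc] at hj
              rw [Finset.mem_range]; omega
            · intro j _ _; positivity
        _ ≤ 1 / (1 - x) := geom_sum_le_inv x hx0 hx1 (m + 1)
    have hsM : s ≤ M / δ := by
      calc s ≤ ∑ j ∈ Finset.Icc 1 m, (1 - δ) ^ j * M := by
              apply Finset.sum_le_sum
              intro j hj
              rw [Finset.mem_Icc] at hj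
              exact (h j hj.1 hj.2).2
        _ = (∑ j ∈ Finset.Icc 1 m, (1 - δ) ^ j) * M := by rw [Finset.sum_mul]
        _ ≤ (1 / (1 - (1 - δ))) * M :=
              mul_le_mul_of_nonneg_right (hsum_geom _ h1δ (by linarith)) hM.le
        _ = M / δ := by rw [sub_sub_cancel, div_mul_eq_mul_div, one_mul]
    have hsqrts : Real.sqrt s ≤ Real.sqrt M / Real.sqrt δ := by
      have h1 : Real.sqrt s ≤ Real.sqrt (M / δ) := Real.sqrt_le_sqrt hsM
      rwa [Real.sqrt_div hM.le] at h1
    have hMM : Real.sqrt M * Real.sqrt M = M := Real.mul_self_sqrt hM.le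
    have key : ∀ j ∈ Finset.Icc 1 m,
        a j * Real.log s - a j * Real.log (a j) ≤
          2 * Real.sqrt M * Real.sqrt s * r ^ j := by
      intro j hj
      rw [Finset.mem_Icc] at hj
      obtain ⟨ha1, ha2⟩ := h j hj.1 hj.2
      have haj : 0 < a j := by linarith
      have hsqa : Real.sqrt (a j) ≤ r ^ j * Real.sqrt M := by
        have h1 : Real.sqrt (a j) ≤ Real.sqrt ((1 - δ) ^ j * M) :=
          Real.sqrt_le_sqrt ha2
        rwa [Real.sqrt_mul (pow_nonneg h1δ j), sqrt_pow_eq _ h1δ] at h1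
      have e1 : a j * Real.log s - a j * Real.log (a j) =
          a j * Real.log (s / a j) := by
        rw [Real.log_div hs0.ne' haj.ne']; ring
      rw [e1]
      calc a j * Real.log (s / a j)
          ≤ a j * (2 * Real.sqrt (s / a j)) :=
            mul_le_mul_of_nonneg_left (log_le_two_sqrt _ (by positivity)) haj.le
        _ = 2 * Real.sqrt (a j) * Real.sqrt s := by
            rw [Real.sqrt_div hs0.le]
            rw [show a j * (2 * (Real.sqrt s / Real.sqrt (a j))) =
              2 * (a j / Real.sqrt (a j)) * Real.sqrt s by ring, Real.div_sqrt]
        _ ≤ 2 * (r ^ j * Real.sqrt M) * Real.sqrt s := by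
            have hss : 0 ≤ Real.sqrt s := Real.sqrt_nonneg _
            nlinarith
        _ = 2 * Real.sqrt M * Real.sqrt s * r ^ j := by ring
    calc s * Real.log s
        = ∑ j ∈ Finset.Icc 1 m, a j * Real.log s := by rw [← Finset.sum_mul]
      _ = (∑ j ∈ Finset.Icc 1 m, a j * Real.log (a j)) +
            ∑ j ∈ Finset.Icc 1 m, (a j * Real.log s - a j * Real.log (a j)) := by
            rw [← Finset.sum_add_distrib]
            apply Finset.sum_congr rfl
            intros; ring
      _ ≤ (∑ j ∈ Finset.Icc 1 m, a j * Real.log (a j)) +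
            ∑ j ∈ Finset.Icc 1 m, 2 * Real.sqrt M * Real.sqrt s * r ^ j :=
            add_le_add_right (Finset.sum_le_sum key) _
      _ = (∑ j ∈ Finset.Icc 1 m, a j * Real.log (a j)) +
            2 * Real.sqrt M * Real.sqrt s * ∑ j ∈ Finset.Icc 1 m, r ^ j := by
            rw [← Finset.mul_sum]
      _ ≤ (∑ j ∈ Finset.Icc 1 m, a j * Real.log (a j)) +
            2 * Real.sqrt M * Real.sqrt s * (1 / (1 - r)) := by
            apply add_le_add_right
            apply mul_le_mul_of_nonneg_left (hsum_geom r hr0 hr1)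
            positivity
      _ ≤ (∑ j ∈ Finset.Icc 1 m, a j * Real.log (a j)) +
            2 / (Real.sqrt δ * (1 - r)) * M := by
            apply add_le_add_right
            have hss : 0 ≤ Real.sqrt s := Real.sqrt_nonneg _
            have hsm : 0 ≤ Real.sqrt M := Real.sqrt_nonneg _
            have h2 : 2 * Real.sqrt M * Real.sqrt s * (1 / (1 - r)) ≤
                2 * Real.sqrt M * (Real.sqrt M / Real.sqrt δ) * (1 / (1 - r)) := by
              gcongr
            have h3 : 2 * Real.sqrt M * (Real.sqrt M / Real.sqrt δ) * (1 / (1 - r)) =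
                2 / (Real.sqrt δ * (1 - r)) * M := by
              field_simp
              nlinarith [hMM]
            linarith
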